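/- Let α > −1, let q ≥ 0 be an integer, and let n ≥ 1 be an integer. For integers 0 ≤ i < j ≤ n−1, the polynomials P_{2n−2i}^{α+i,q+i} and P_{2n−2j}^{α+j,q+j} have only real zeros, and denoting by x_{2m,2m}^{β,r} the largest zero of P_{2m}^{β,r}, one has x_{2n−2j,2n−2j}^{α+j,q+j} < x_{2n−2i,2n−2i}^{α+i,q+i}. -/

import Mathlib

open MeasureTheory intervalIntegral Polynomial

/-- Pochhammer symbol `(a)_k = a (a+1) ⋯ (a+k-1)`. -/
noncomputable def poch (a : ℝ) (k : ℕ) : ℝ := ∏ i ∈ Finset.range k, (a + i)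

/-- `Peven α q n x = P_{2n}^{α,q}(x)`, the monic generalized Gegenbauer-type polynomial
`Σ_{k=0}^{n} (−n)_k (−n−q−1/2)_k / (k! (−2n−α−q−1/2)_k) x^{2n−2k}`. -/
noncomputable def Peven (α : ℝ) (q n : ℕ) (x : ℝ) : ℝ :=
  ∑ k ∈ Finset.range (n + 1),
    poch (-(n : ℝ)) k * poch (-(n : ℝ) - q - 1/2) k /
      ((Nat.factorial k : ℝ) * poch (-(2 * (n : ℝ)) - α - q - 1/2) k) * x ^ (2*n - 2*k)

/-- `Podd α q n x = P_{2n+1}^{α,q}(x) = (1+x) P_{2n}^{α+1,q}(x)`. -/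
noncomputable def Podd (α : ℝ) (q n : ℕ) (x : ℝ) : ℝ := (1 + x) * Peven (α + 1) q n x

/-- `P α q n x = P_n^{α,q}(x)`. -/
noncomputable def P (α : ℝ) (q : ℕ) (n : ℕ) (x : ℝ) : ℝ :=
  if Even n then Peven α q (n / 2) x else Podd α q (n / 2) x


lemma poch_zero (a : ℝ) : poch a 0 = 1 := Finset.prod_range_zero _
lemma poch_succ (a : ℝ) (k : ℕ) : poch a (k+1) = poch a k * (a + k) := Finset.prod_range_succ _ _
lemma poch_succ' (a : ℝ) (k : ℕ) : poch a (k+1) = a * poch (a+1) k := by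
  rw [poch, Finset.prod_range_succ', poch]
  have h1 : ∀ i ∈ Finset.range k, a + ((i:ℕ) + 1 : ℕ) = (a+1) + i := fun i _ => by push_cast; ring
  rw [Finset.prod_congr rfl h1]
  push_cast
  ring

lemma poch_ne_zero {a : ℝ} {k : ℕ} (h : ∀ i : ℕ, i < k → a + i ≠ 0) : poch a k ≠ 0 :=
  Finset.prod_ne_zero_iff.2 fun i hi => h i (Finset.mem_range.1 hi)

lemma poch_neg_nat_eq_zero {m k : ℕ} (h : m < k) : poch (-(m:ℝ)) k = 0 :=
  Finset.prod_eq_zero (Finset.mem_range.2 h) (by push_cast; ring)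

/-- coefficient of `t^(m-k)` in the monic Jacobi-type polynomial `Qf m a b`. -/
noncomputable def qc (m : ℕ) (a b : ℝ) (k : ℕ) : ℝ :=
  poch (-(m:ℝ)) k * poch (-(m:ℝ) - a) k /
    ((Nat.factorial k : ℝ) * poch (-(2*(m:ℝ)) - a - b) k)

lemma qc_zero (m : ℕ) (a b : ℝ) : qc m a b 0 = 1 := by
  simp [qc, poch_zero]

lemma qc_eq_zero {m k : ℕ} (a b : ℝ) (h : m < k) : qc m a b k = 0 := by
  rw [qc, poch_neg_nat_eq_zero h, zero_mul, zero_div]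

lemma qc_key (m : ℕ) (a b : ℝ) (k : ℕ)
    (hD : poch (-(2*(m:ℝ)) - a - b) (k+1) ≠ 0) :
    qc m a b k * (a + m - k) + qc m a b (k+1) * ((k:ℝ)+1 - a - b - m)
      = -(a+b+m) * qc (m+1) (a-1) (b-1) (k+1) := by
  have e1 : -((m:ℝ)+1) - (a-1) = -(m:ℝ) - a := by ring
  have e2 : -(2*((m:ℝ)+1)) - (a-1) - (b-1) = -(2*(m:ℝ)) - a - b := by ring
  have e3 : -((m:ℝ)+1) + 1 = -(m:ℝ) := by ring
  have hDk : poch (-(2*(m:ℝ)) - a - b) k ≠ 0 := by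
    rw [poch_succ] at hD; exact left_ne_zero_of_mul hD
  have hdk : (-(2*(m:ℝ)) - a - b) + k ≠ 0 := by
    rw [poch_succ] at hD; exact right_ne_zero_of_mul hD
  have hf : ((Nat.factorial k : ℝ)) ≠ 0 := Nat.cast_ne_zero.2 (Nat.factorial_ne_zero k)
  have hk1 : ((k:ℝ)+1) ≠ 0 := by positivity
  rw [qc, qc, qc]
  push_cast
  rw [e1, e2, poch_succ (-(m:ℝ)), poch_succ (-(m:ℝ) - a), poch_succ (-(2*(m:ℝ)) - a - b)]
  rw [show (-((m:ℝ)+1)) = (-((m:ℝ)+1)) from rfl]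
  rw [show poch (-((m:ℝ)+1)) (k+1) = (-((m:ℝ)+1)) * poch (-(m:ℝ)) k by
    rw [poch_succ', e3]]
  rw [Nat.factorial_succ]
  push_cast
  rw [div_mul_eq_mul_div, div_mul_eq_mul_div, mul_div_assoc', div_add_div _ _ (mul_ne_zero hf hDk)
    (mul_ne_zero (mul_ne_zero hk1 hf) (mul_ne_zero hDk hdk)), div_eq_div_iff
    (mul_ne_zero (mul_ne_zero hf hDk) (mul_ne_zero (mul_ne_zero hk1 hf) (mul_ne_zero hDk hdk)))
    (mul_ne_zero (mul_ne_zero hk1 hf) (mul_ne_zero hDk hdk))]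
  ring

noncomputable def Qf (m : ℕ) (a b : ℝ) (t : ℝ) : ℝ :=
  ∑ k ∈ Finset.range (m+1), qc m a b k * t ^ (m - k)

/-- the (formal) derivative of `Qf`. -/
noncomputable def Df (m : ℕ) (a b : ℝ) (t : ℝ) : ℝ :=
  ∑ k ∈ Finset.range (m+1), qc m a b k * (((m - k : ℕ)) * t ^ (m - k - 1))

lemma Qf_hasDerivAt (m : ℕ) (a b : ℝ) (t : ℝ) : HasDerivAt (Qf m a b) (Df m a b t) t := by
  have : ∀ k ∈ Finset.range (m+1),
      HasDerivAt (fun t : ℝ => qc m a b k * t ^ (m - k))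
        (qc m a b k * (((m - k : ℕ)) * t ^ (m - k - 1))) t :=
    fun k _ => (hasDerivAt_pow (m-k) t).const_mul _
  exact HasDerivAt.fun_sum this

lemma Qf_continuous (m : ℕ) (a b : ℝ) : Continuous (Qf m a b) := by
  apply continuous_finset_sum
  exact fun k _ => continuous_const.mul (continuous_pow _)

lemma qc_deriv_aux (m k : ℕ) : ((m + 1 - k : ℕ) : ℝ) * poch (-((m:ℝ)+1)) k
    = ((m:ℝ)+1) * poch (-(m:ℝ)) k := by
  rcases le_or_gt k (m+1) with hk | hk
  · have h1 : poch (-((m:ℝ)+1)) (k+1) = poch (-((m:ℝ)+1)) k * (-((m:ℝ)+1) + k) :=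
      poch_succ _ _
    have h2 : poch (-((m:ℝ)+1)) (k+1) = -((m:ℝ)+1) * poch (-(m:ℝ)) k := by
      rw [poch_succ']; congr 1; ring
    have hc : ((m + 1 - k : ℕ) : ℝ) = ((m:ℝ)+1) - k := by
      push_cast [Nat.cast_sub hk]; ring
    have := h1.symm.trans h2
    rw [hc]
    nlinarith [this]
  · have h1 : poch (-((m:ℝ)+1)) k = 0 := by
      have : (m+1 : ℕ) < k := hk
      simpa using poch_neg_nat_eq_zero (m := m+1) this
    have h2 : poch (-(m:ℝ)) k = 0 := poch_neg_nat_eq_zero (by omega)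
    rw [h1, h2]; ring

lemma qc_deriv (m : ℕ) (a b : ℝ) (k : ℕ) :
    ((m + 1 - k : ℕ) : ℝ) * qc (m+1) a b k = ((m:ℝ)+1) * qc m (a+1) (b+1) k := by
  have e1 : -((m:ℝ)+1) - a = -(m:ℝ) - (a+1) := by ring
  have e2 : -(2*((m:ℝ)+1)) - a - b = -(2*(m:ℝ)) - (a+1) - (b+1) := by ring
  rw [qc, qc]
  push_cast
  rw [e1, e2]
  rw [mul_div_assoc', mul_div_assoc', ← mul_assoc, ← mul_assoc, qc_deriv_aux]

lemma Df_eq (m : ℕ) (a b : ℝ) (t : ℝ) :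
    Df (m+1) a b t = ((m:ℝ)+1) * Qf m (a+1) (b+1) t := by
  rw [Df, Finset.sum_range_succ]
  simp only [Nat.sub_self, Nat.cast_zero, zero_mul, mul_zero, add_zero]
  rw [Qf, Finset.mul_sum]
  refine Finset.sum_congr rfl fun k hk => ?_
  have hk' : k ≤ m := by simpa [Nat.lt_succ_iff] using hk
  have he : m + 1 - k - 1 = m - k := by omega
  rw [he, ← mul_assoc, mul_comm (qc (m+1) a b k) (((m + 1 - k : ℕ)) : ℝ), qc_deriv,
    mul_assoc]

lemma Qf_hasDerivAt' (m : ℕ) (a b : ℝ) (t : ℝ) :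
    HasDerivAt (Qf (m+1) a b) (((m:ℝ)+1) * Qf m (a+1) (b+1) t) t := by
  rw [← Df_eq]; exact Qf_hasDerivAt _ _ _ _

/-- The ladder identity. -/
lemma Qf_ladder (m : ℕ) (a b : ℝ) (t : ℝ)
    (hD : ∀ k, k ≤ m + 1 → poch (-(2*(m:ℝ)) - a - b) k ≠ 0) :
    a*(1-t)*Qf m a b t - b*t*Qf m a b t + t*(1-t)*Df m a b t
      = -(a+b+m) * Qf (m+1) (a-1) (b-1) t := by
  have key : ∀ k, k ≤ m →
      a*(1-t)*(qc m a b k * t^(m-k)) - b*t*(qc m a b k * t^(m-k))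
        + t*(1-t)*(qc m a b k * (((m - k : ℕ)) * t^(m-k-1)))
      = qc m a b k * (a + m - k) * t^(m-k)
        + qc m a b k * ((k:ℝ) - a - b - m) * t^(m+1-k) := by
    intro k hk
    rcases eq_or_lt_of_le hk with rfl | hlt
    · simp only [Nat.sub_self, Nat.cast_zero, pow_zero, zero_mul, mul_zero]
      have : k + 1 - k = 1 := by omega
      rw [this, pow_one]
      ring
    · have h1 : t^(m-k) = t * t^(m-k-1) := by
        rw [← pow_succ']
        congr 1
        omega
      have h2 : t^(m+1-k) = t * t^(m-k) := by
        rw [← pow_succ']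
        congr 1
        omega
      have h3 : ((m - k : ℕ) : ℝ) = (m:ℝ) - k := by
        push_cast [Nat.cast_sub (le_of_lt hlt)]; ring
      rw [h2, h1, h3]
      ring
  calc a*(1-t)*Qf m a b t - b*t*Qf m a b t + t*(1-t)*Df m a b t
      = ∑ k ∈ Finset.range (m+1), (qc m a b k * (a + m - k) * t^(m-k)
        + qc m a b k * ((k:ℝ) - a - b - m) * t^(m+1-k)) := by
        rw [Qf, Df, Finset.mul_sum, Finset.mul_sum, Finset.mul_sum, ← Finset.sum_sub_distrib,
          ← Finset.sum_add_distrib]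
        exact Finset.sum_congr rfl fun k hk => key k (by simpa [Nat.lt_succ_iff] using hk)
    _ = -(a+b+m) * Qf (m+1) (a-1) (b-1) t := by
        rw [Finset.sum_add_distrib, Qf, Finset.mul_sum]
        rw [Finset.sum_range_succ' (fun j => -(a+b+(m:ℝ)) * (qc (m+1) (a-1) (b-1) j * t^(m+1-j)))]
        have hB : ∑ k ∈ Finset.range (m+1), qc m a b k * ((k:ℝ) - a - b - m) * t^(m+1-k)
            = (∑ k ∈ Finset.range m, qc m a b (k+1) * (((k:ℝ)+1) - a - b - m) * t^(m+1-(k+1)))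
              + qc m a b 0 * ((0:ℝ) - a - b - m) * t^(m+1) := by
          rw [Finset.sum_range_succ' (fun k => qc m a b k * ((k:ℝ) - a - b - m) * t^(m+1-k))]
          push_cast
          simp
        rw [hB]
        have hB2 : ∑ k ∈ Finset.range m, qc m a b (k+1) * (((k:ℝ)+1) - a - b - m) * t^(m+1-(k+1))
            = ∑ k ∈ Finset.range (m+1), qc m a b (k+1) * (((k:ℝ)+1) - a - b - m) * t^(m+1-(k+1)) := by
          rw [Finset.sum_range_succ]
          rw [qc_eq_zero a b (by omega : m < m + 1)]
          simp
        rw [hB2, ← add_assoc, ← Finset.sum_add_distrib]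
        have hmain : ∀ k ∈ Finset.range (m+1),
            qc m a b k * (a + m - k) * t^(m-k)
              + qc m a b (k+1) * (((k:ℝ)+1) - a - b - m) * t^(m+1-(k+1))
            = -(a+b+(m:ℝ)) * (qc (m+1) (a-1) (b-1) (k+1) * t^(m+1-(k+1))) := by
          intro k hk
          have hk' : k ≤ m := by simpa [Nat.lt_succ_iff] using hk
          have he : m + 1 - (k+1) = m - k := by omega
          rw [he]
          have := qc_key m a b k (hD (k+1) (by omega))
          calc qc m a b k * (a + m - k) * t^(m-k) + qc m a b (k+1) * (((k:ℝ)+1) - a - b - m) * t^(m-k)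
              = (qc m a b k * (a + (m:ℝ) - k) + qc m a b (k+1) * ((k:ℝ)+1 - a - b - m)) * t^(m-k) := by ring
            _ = -(a+b+(m:ℝ)) * (qc (m+1) (a-1) (b-1) (k+1) * t^(m-k)) := by rw [this]; ring
        rw [Finset.sum_congr rfl hmain]
        have h0 : qc m a b 0 * ((0:ℝ) - a - b - m) * t^(m+1)
            = -(a+b+(m:ℝ)) * (qc (m+1) (a-1) (b-1) 0 * t^(m+1-0)) := by
          rw [qc_zero, qc_zero]
          simp only [Nat.sub_zero]
          ring
        rw [h0]

lemma pochD_ne_zero {m : ℕ} {a b : ℝ} (ha : 0 < a) (hb : -1 < b) {k : ℕ} (hk : k ≤ m) :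
    poch (-(2*(m:ℝ)) - a - b) k ≠ 0 := by
  apply poch_ne_zero
  intro i hi
  have him : (i:ℝ) ≤ (m:ℝ) - 1 := by
    have : i + 1 ≤ m := by omega
    have := (Nat.cast_le (α := ℝ)).2 this
    push_cast at this
    linarith
  have hm : (0:ℝ) ≤ m := Nat.cast_nonneg m
  intro h
  nlinarith

open Set in
/-- Rolle-type root counting: if `f` vanishes at the endpoints of `[u,v]` and on a finite set
inside `(u,v)`, its derivative vanishes on a finite set of cardinality one more. -/
lemma rolle_count (s : Finset ℝ) {f f' : ℝ → ℝ} (u v : ℝ) (huv : u < v)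
    (hc : ContinuousOn f (Icc u v)) (hd : ∀ x ∈ Ioo u v, HasDerivAt f (f' x) x)
    (hs : ↑s ⊆ Ioo u v) (hz : ∀ x ∈ s, f x = 0) (hu : f u = 0) (hv : f v = 0) :
    ∃ t : Finset ℝ, t.card = s.card + 1 ∧ ↑t ⊆ Ioo u v ∧ ∀ x ∈ t, f' x = 0 := by
  classical
  induction s using Finset.strongInduction generalizing u v with
  | _ s ih =>
    rcases s.eq_empty_or_nonempty with rfl | hne
    · obtain ⟨c, hc1, hc2⟩ := exists_hasDerivAt_eq_zero huv hc (hu.trans hv.symm) hd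
      exact ⟨{c}, by simp, by simpa using hc1, by simpa using hc2⟩
    · set M := s.max' hne with hM
      have hMs : M ∈ s := s.max'_mem hne
      have hMIoo : M ∈ Ioo u v := hs hMs
      have hsub : s.erase M ⊂ s := Finset.erase_ssubset hMs
      obtain ⟨t1, ht1c, ht1s, ht1z⟩ := ih (s.erase M) hsub u M hMIoo.1
        (hc.mono (Icc_subset_Icc le_rfl hMIoo.2.le))
        (fun x hx => hd x ⟨hx.1, hx.2.trans hMIoo.2⟩)
        (fun x hx => by
          have hxs : x ∈ s := Finset.mem_of_mem_erase hx
          have hxM : x ≠ M := Finset.ne_of_mem_erase hx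
          exact ⟨(hs hxs).1, lt_of_le_of_ne (s.le_max' x hxs) hxM⟩)
        (fun x hx => hz x (Finset.mem_of_mem_erase hx)) hu (hz M hMs)
      obtain ⟨c, hc1, hc2⟩ := exists_hasDerivAt_eq_zero hMIoo.2
        (hc.mono (Icc_subset_Icc hMIoo.1.le le_rfl)) ((hz M hMs).trans hv.symm)
        (fun x hx => hd x ⟨hMIoo.1.trans hx.1, hx.2⟩)
      refine ⟨insert c t1, ?_, ?_, ?_⟩
      · have hct1 : c ∉ t1 := fun hmem => absurd (ht1s hmem).2 (not_lt.2 hc1.1.le)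
        rw [Finset.card_insert_of_notMem hct1, ht1c, Finset.card_erase_of_mem hMs]
        have : 1 ≤ s.card := Finset.card_pos.2 hne
        omega
      · intro x hx
        rcases Finset.mem_insert.1 (by simpa using hx) with rfl | hx1
        · exact ⟨hMIoo.1.trans hc1.1, hc1.2⟩
        · exact ⟨(ht1s hx1).1, (ht1s hx1).2.trans hMIoo.2⟩
      · intro x hx
        rcases Finset.mem_insert.1 hx with rfl | hx1
        · exact hc2
        · exact ht1z x hx1

open Set in
lemma g_hasDerivAt (δ : ℕ) (a b : ℝ) (ha : 0 < a) (hb : -1 < b) {t : ℝ} (ht : t ∈ Ioo (0:ℝ) 1) :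
    HasDerivAt (fun t : ℝ => t^(a+1) * (1-t)^(b+1) * Qf δ (a+1) (b+1) t)
      (t^a * (1-t)^b * (-(a+b+2+δ)) * Qf (δ+1) a b t) t := by
  have ht0 : (0:ℝ) < t := ht.1
  have ht1 : t < 1 := ht.2
  have h1t : (0:ℝ) < 1 - t := by linarith
  have h1 : HasDerivAt (fun t : ℝ => t^(a+1)) ((a+1) * t^a) t := by
    have := Real.hasDerivAt_rpow_const (x := t) (p := a+1) (Or.inl ht0.ne')
    simpa [show a+1-1 = a by ring] using this
  have h2 : HasDerivAt (fun t : ℝ => (1-t)^(b+1)) (-((b+1) * (1-t)^b)) t := by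
    have hout := Real.hasDerivAt_rpow_const (x := 1-t) (p := b+1) (Or.inl h1t.ne')
    have hin : HasDerivAt (fun t : ℝ => 1 - t) (-1) t := by
      simpa using (hasDerivAt_id t).const_sub 1
    have := hout.comp t hin
    simpa [show b+1-1 = b by ring, Function.comp_def] using this.congr_deriv (by ring)
  have h3 := Qf_hasDerivAt δ (a+1) (b+1) t
  have H := (h1.mul h2).mul h3
  have hD' : ∀ k, k ≤ δ + 1 → poch (-(2*(δ:ℝ)) - (a+1) - (b+1)) k ≠ 0 := by
    intro k hk
    have e : -(2*(δ:ℝ)) - (a+1) - (b+1) = -(2*(((δ+1 : ℕ)):ℝ)) - a - b := by push_cast; ring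
    rw [e]
    exact pochD_ne_zero ha hb hk
  have L := Qf_ladder δ (a+1) (b+1) t hD'
  have hta : t^(a+1) = t^a * t := by rw [Real.rpow_add_one ht0.ne']
  have htb : (1-t)^(b+1) = (1-t)^b * (1-t) := by rw [Real.rpow_add_one h1t.ne']
  convert H using 1
  · rfl
  · rfl
  · rfl
  rw [Pi.mul_apply, hta, htb]
  have e2 : a + 1 - 1 = a := by ring
  have e3 : b + 1 - 1 = b := by ring
  rw [e2, e3] at L
  linear_combination (-(t^a * (1-t)^b)) * L

open Set in
theorem Qf_roots : ∀ (δ : ℕ) (a b : ℝ), 0 < a → -1 < b →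
    ∃ s : Finset ℝ, s.card = δ ∧ ↑s ⊆ Set.Ioo (0:ℝ) 1 ∧ ∀ x ∈ s, Qf δ a b x = 0 := by
  intro δ
  induction δ with
  | zero => exact fun a b _ _ => ⟨∅, rfl, by simp, by simp⟩
  | succ δ ih =>
    intro a b ha hb
    obtain ⟨s, hcard, hsub, hz⟩ := ih (a+1) (b+1) (by linarith) (by linarith)
    have ha1 : (0:ℝ) < a + 1 := by linarith
    have hb1 : (0:ℝ) < b + 1 := by linarith
    have hcont : ContinuousOn (fun t : ℝ => t^(a+1) * (1-t)^(b+1) * Qf δ (a+1) (b+1) t)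
        (Icc 0 1) := by
      apply ContinuousOn.mul
      apply ContinuousOn.mul
      · exact fun t _ => (Real.continuousAt_rpow_const t (a+1) (Or.inr ha1.le)).continuousWithinAt
      · intro t _
        exact ((Real.continuousAt_rpow_const (1-t) (b+1) (Or.inr hb1.le)).comp
          ((continuous_const.sub continuous_id).continuousAt)).continuousWithinAt
      · exact (Qf_continuous δ (a+1) (b+1)).continuousOn
    have hg0 : (fun t : ℝ => t^(a+1) * (1-t)^(b+1) * Qf δ (a+1) (b+1) t) 0 = 0 := by
      simp [Real.zero_rpow ha1.ne']
    have hg1 : (fun t : ℝ => t^(a+1) * (1-t)^(b+1) * Qf δ (a+1) (b+1) t) 1 = 0 := by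
      simp [Real.zero_rpow hb1.ne']
    obtain ⟨t1, ht1c, ht1s, ht1z⟩ := rolle_count s (0:ℝ) 1 one_pos hcont
      (fun x hx => g_hasDerivAt δ a b ha hb hx) hsub
      (fun x hx => by rw [hz x hx]; ring) hg0 hg1
    refine ⟨t1, by omega, ht1s, fun x hx => ?_⟩
    have hx' := ht1s hx
    have h1 := ht1z x hx
    have hp1 : (0:ℝ) < x^a := Real.rpow_pos_of_pos hx'.1 a
    have hp2 : (0:ℝ) < (1-x)^b := Real.rpow_pos_of_pos (by linarith [hx'.2]) b
    have hp3 : (0:ℝ) < a+b+2+(δ:ℝ) := by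
      have := Nat.cast_nonneg (α := ℝ) δ
      linarith
    have hne : x^a * (1-x)^b * (-(a+b+2+(δ:ℝ))) ≠ 0 :=
      mul_ne_zero (mul_ne_zero hp1.ne' hp2.ne') (by linarith)
    exact (mul_eq_zero.1 h1).resolve_left hne

noncomputable def QP (m : ℕ) (a b : ℝ) : Polynomial ℝ :=
  ∑ k ∈ Finset.range (m+1), C (qc m a b k) * X ^ (m - k)

lemma QP_eval (m : ℕ) (a b : ℝ) (t : ℝ) : (QP m a b).eval t = Qf m a b t := by
  simp [QP, Qf, eval_finset_sum]

lemma QP_eq (m : ℕ) (a b : ℝ) :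
    QP m a b = X ^ m + ∑ k ∈ Finset.range m, C (qc m a b (k+1)) * X ^ (m - (k+1)) := by
  rw [QP, Finset.sum_range_succ' (fun k => C (qc m a b k) * X ^ (m - k))]
  rw [qc_zero]
  simp [add_comm]

lemma QP_tail_degree_lt (m : ℕ) (a b : ℝ) :
    (∑ k ∈ Finset.range m, C (qc m a b (k+1)) * X ^ (m - (k+1))).degree < (X ^ m : ℝ[X]).degree := by
  rw [degree_X_pow]
  apply lt_of_le_of_lt (Polynomial.degree_sum_le _ _)
  rw [Finset.sup_lt_iff (by exact_mod_cast WithBot.bot_lt_coe m)]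
  intro k hk
  apply lt_of_le_of_lt (degree_C_mul_X_pow_le _ _)
  have hkm := Finset.mem_range.1 hk
  exact_mod_cast (show m - (k+1) < m by omega)

lemma QP_monic (m : ℕ) (a b : ℝ) : (QP m a b).Monic := by
  rw [QP_eq]
  exact (monic_X_pow m).add_of_left (QP_tail_degree_lt m a b)

lemma QP_degree (m : ℕ) (a b : ℝ) : (QP m a b).degree = m := by
  rw [QP_eq, degree_add_eq_left_of_degree_lt (QP_tail_degree_lt m a b), degree_X_pow]

open Set in
theorem Qf_factor (m : ℕ) (a b : ℝ) (ha : 0 < a) (hb : -1 < b) :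
    ∃ s : Finset ℝ, s.card = m ∧ ↑s ⊆ Set.Ioo (0:ℝ) 1 ∧
      ∀ t : ℝ, Qf m a b t = ∏ r ∈ s, (t - r) := by
  obtain ⟨s, hcard, hsub, hz⟩ := Qf_roots m a b ha hb
  refine ⟨s, hcard, hsub, fun t => ?_⟩
  set p : ℝ[X] := ∏ r ∈ s, (X - C r) with hp
  have hpm : p.Monic := monic_prod_of_monic _ _ fun r _ => monic_X_sub_C r
  have hpd : p.degree = m := by
    rw [hp, degree_prod]
    simp [Polynomial.degree_X_sub_C, hcard]
  have hQ : QP m a b = p := by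
    by_contra hne
    have hd : (QP m a b - p).degree < (m : WithBot ℕ) := by
      rw [← QP_degree m a b]
      exact degree_sub_lt (by rw [hpd, QP_degree]) (QP_monic m a b).ne_zero
        (by rw [(QP_monic m a b).leadingCoeff, hpm.leadingCoeff])
    have hzero : QP m a b - p = 0 := by
      apply Polynomial.eq_zero_of_natDegree_lt_card_of_eval_eq_zero' _ s
      · intro r hr
        rw [eval_sub, QP_eval, hz r hr, hp, eval_prod]
        simp only [eval_sub, eval_X, eval_C]
        rw [Finset.prod_eq_zero hr (by ring)]
        ring
      · rw [hcard]
        by_cases h0 : QP m a b - p = 0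
        · exact absurd (sub_eq_zero.1 h0) hne
        · exact natDegree_lt_iff_degree_lt h0 |>.2 (by exact_mod_cast hd)
    exact hne (sub_eq_zero.1 hzero)
  rw [← QP_eval, hQ, hp, eval_prod]
  simp

open Set in
/-- Any root of the next-level polynomial is strictly below the largest root. -/
lemma step_lt (m : ℕ) (a b : ℝ) (s : Finset ℝ) (hne : s.Nonempty)
    (hprod : ∀ t : ℝ, Qf (m+1) a b t = ∏ r ∈ s, (t - r))
    {x : ℝ} (hx : Qf m (a+1) (b+1) x = 0) : x < s.max' hne := by
  classical
  by_contra hcon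
  push_neg at hcon
  set M := s.max' hne with hM
  set p : ℝ[X] := ∏ r ∈ s, (X - C r) with hp
  have hpe : ∀ t, p.eval t = Qf (m+1) a b t := by
    intro t
    rw [hprod, hp, eval_prod]
    simp
  have hderiv : p.derivative.eval x = ((m:ℝ)+1) * Qf m (a+1) (b+1) x := by
    have h1 : HasDerivAt (fun t => p.eval t) (p.derivative.eval x) x := p.hasDerivAt x
    have h2 : HasDerivAt (fun t => p.eval t) (((m:ℝ)+1) * Qf m (a+1) (b+1) x) x := by
      have h3 := Qf_hasDerivAt' m a b x
      apply h3.congr_of_eventuallyEq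
      filter_upwards with t
      exact hpe t
    exact h1.unique h2
  have hzero : p.derivative.eval x = 0 := by rw [hderiv, hx, mul_zero]
  have hD2 : derivative p = ∑ r ∈ s, (∏ j ∈ s.erase r, (X - C j)) * derivative (X - C r) := by
    rw [hp, Finset.prod, derivative_prod, Finset.sum]
    refine congr_arg Multiset.sum (Multiset.map_congr rfl fun r hr => ?_)
    rw [Finset.prod, Finset.erase_val]
  have hpos : 0 < p.derivative.eval x := by
    rw [hD2, eval_finset_sum]
    have hterm : ∀ r ∈ s, (0:ℝ) ≤ ((∏ j ∈ s.erase r, (X - C j)) * derivative (X - C r)).eval x := by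
      intro r hr
      simp only [derivative_sub, derivative_X, derivative_C, sub_zero, mul_one, eval_prod,
        eval_mul, eval_sub, eval_X, eval_C, eval_one]
      apply Finset.prod_nonneg
      intro j hj
      have hjs : j ∈ s := Finset.mem_of_mem_erase hj
      have : j ≤ M := s.le_max' j hjs
      linarith
    apply Finset.sum_pos'
    · exact hterm
    · refine ⟨M, s.max'_mem hne, ?_⟩
      simp only [derivative_sub, derivative_X, derivative_C, sub_zero, mul_one, eval_prod,
        eval_sub, eval_X, eval_C]
      apply Finset.prod_pos
      intro j hj
      have hjs : j ∈ s := Finset.mem_of_mem_erase hj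
      have hjM : j ≠ M := Finset.ne_of_mem_erase hj
      have : j < M := lt_of_le_of_ne (s.le_max' j hjs) hjM
      linarith
  exact absurd hzero hpos.ne'

lemma root_lt_max : ∀ (δ : ℕ), 1 ≤ δ → ∀ (m : ℕ) (a b : ℝ), 0 < a → -1 < b → δ ≤ m →
    ∀ (s : Finset ℝ) (hne : s.Nonempty), (∀ t, Qf m a b t = ∏ r ∈ s, (t - r)) →
    ∀ x : ℝ, Qf (m - δ) (a + δ) (b + δ) x = 0 → x < s.max' hne := by
  intro δ hδ1
  induction δ, hδ1 using Nat.le_induction with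
  | base =>
    intro m a b ha hb hm s hne hprod x hx
    have hm1 : m - 1 + 1 = m := by omega
    apply step_lt (m-1) a b s hne (by rw [hm1]; exact hprod)
    push_cast at hx
    exact hx
  | succ δ hδ ih =>
    intro m a b ha hb hm s hne hprod x hx
    have haδ : (0:ℝ) < a + δ := by
      have := Nat.cast_nonneg (α := ℝ) δ
      linarith
    have hbδ : (-1:ℝ) < b + δ := by
      have := Nat.cast_nonneg (α := ℝ) δ
      linarith
    obtain ⟨smid, hmc, hmsub, hmprod⟩ := Qf_factor (m - δ) (a + δ) (b + δ) haδ hbδ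
    have hmne : smid.Nonempty := by
      rw [← Finset.card_pos, hmc]
      omega
    have hx' : x < smid.max' hmne := by
      have hm2 : m - δ - 1 + 1 = m - δ := by omega
      apply step_lt (m - δ - 1) (a + δ) (b + δ) smid hmne (by rw [hm2]; exact hmprod)
      have e1 : m - δ - 1 = m - (δ + 1) := by omega
      have e2 : a + (δ:ℝ) + 1 = a + ((δ:ℕ)+1 : ℕ) := by push_cast; ring
      have e3 : b + (δ:ℝ) + 1 = b + ((δ:ℕ)+1 : ℕ) := by push_cast; ring
      rw [e1, e2, e3]
      exact hx
    have hroot : Qf (m - δ) (a + δ) (b + δ) (smid.max' hmne) = 0 := by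
      rw [hmprod]
      exact Finset.prod_eq_zero (smid.max'_mem hmne) (by ring)
    exact hx'.trans (ih m a b ha hb (by omega) s hne hprod _ hroot)

open Set in
lemma Qf_build (M : ℕ) (a b : ℝ) (s : Finset ℝ) (hne : s.Nonempty)
    (hsub : ↑s ⊆ Set.Ioo (0:ℝ) 1)
    (hprod : ∀ t : ℝ, Qf M a b t = ∏ r ∈ s, (t - r)) :
    ∃ S : Multiset ℝ, Multiset.card S = 2 * s.card ∧
      (∀ x : ℝ, Qf M a b (x^2) = (S.map (fun r => x - r)).prod) ∧
      Real.sqrt (s.max' hne) ∈ S ∧ ∀ y ∈ S, y ≤ Real.sqrt (s.max' hne) := by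
  classical
  refine ⟨s.val.bind (fun r => {Real.sqrt r, -Real.sqrt r}), ?_, ?_, ?_, ?_⟩
  · rw [Multiset.card_bind]
    have h2 : (Multiset.card ∘ fun r : ℝ => ({Real.sqrt r, -Real.sqrt r} : Multiset ℝ))
        = fun _ => 2 := by
      funext r
      rfl
    rw [h2, Multiset.map_const', Multiset.sum_replicate, smul_eq_mul]
    have hc : s.card = Multiset.card s.val := rfl
    omega
  · intro x
    rw [hprod, Multiset.map_bind]
    rw [Multiset.prod_bind]
    have : ∀ r ∈ s.val, (Multiset.map (fun y => x - y) {Real.sqrt r, -Real.sqrt r}).prod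
        = x^2 - r := by
      intro r hr
      have hr0 : (0:ℝ) < r := (hsub hr).1
      have hrr : Real.sqrt r * Real.sqrt r = r := Real.mul_self_sqrt hr0.le
      simp only [Multiset.insert_eq_cons, Multiset.map_cons, Multiset.map_singleton,
        Multiset.prod_cons, Multiset.prod_singleton]
      nlinarith [hrr]
    rw [Multiset.map_congr rfl this]
    rfl
  · exact Multiset.mem_bind.2 ⟨s.max' hne, s.max'_mem hne, by simp⟩
  · intro y hy
    obtain ⟨r, hr, hyr⟩ := Multiset.mem_bind.1 hy
    have hr0 : (0:ℝ) < r := (hsub hr).1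
    have hle : r ≤ s.max' hne := s.le_max' r hr
    have h1 : Real.sqrt r ≤ Real.sqrt (s.max' hne) := Real.sqrt_le_sqrt hle
    simp only [Multiset.insert_eq_cons, Multiset.mem_cons, Multiset.mem_singleton] at hyr
    rcases hyr with rfl | rfl
    · exact h1
    · have : (0:ℝ) ≤ Real.sqrt (s.max' hne) := Real.sqrt_nonneg _
      have := Real.sqrt_nonneg r
      linarith


lemma Peven_eq_Qf (β : ℝ) (r M : ℕ) (x : ℝ) :
    Peven β r M x = Qf M ((r:ℝ) + 1/2) β (x^2) := by
  rw [Peven, Qf]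
  refine Finset.sum_congr rfl fun k hk => ?_
  have hk' : k ≤ M := by
    have := Finset.mem_range.1 hk
    omega
  have e1 : -(M:ℝ) - r - 1/2 = -(M:ℝ) - ((r:ℝ) + 1/2) := by ring
  have e2 : -(2*(M:ℝ)) - β - r - 1/2 = -(2*(M:ℝ)) - ((r:ℝ) + 1/2) - β := by ring
  have e3 : 2*M - 2*k = 2*(M-k) := by omega
  rw [qc, e1, e2, e3, pow_mul]


/-- For `0 ≤ i < j ≤ n−1`, the polynomials `P_{2n−2i}^{α+i,q+i}` and `P_{2n−2j}^{α+j,q+j}`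
have only real zeros, and the largest zero of the latter is strictly smaller than the largest
zero of the former: `x_{2n−2j,2n−2j}^{α+j,q+j} < x_{2n−2i,2n−2i}^{α+i,q+i}`. -/
theorem largest_zero_monotone_even (α : ℝ) (hα : -1 < α) (q : ℕ) (n : ℕ) (hn : 1 ≤ n)
    (i j : ℕ) (hij : i < j) (hj : j ≤ n - 1) :
    ∃ S T : Multiset ℝ,
      Multiset.card S = 2 * (n - i) ∧ Multiset.card T = 2 * (n - j) ∧
      (∀ x : ℝ, Peven (α + i) (q + i) (n - i) x = (S.map (fun s => x - s)).prod) ∧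
      (∀ x : ℝ, Peven (α + j) (q + j) (n - j) x = (T.map (fun s => x - s)).prod) ∧
      ∃ a b : ℝ, a ∈ T ∧ b ∈ S ∧ (∀ t ∈ T, t ≤ a) ∧ (∀ t ∈ S, t ≤ b) ∧ a < b := by
  have hn2 : 2 ≤ n := by omega
  have hji : j ≤ n - 1 := hj
  -- level parameters
  have hai : (0:ℝ) < ((q+i : ℕ):ℝ) + 1/2 := by positivity
  have haj : (0:ℝ) < ((q+j : ℕ):ℝ) + 1/2 := by positivity
  have hbi : (-1:ℝ) < α + (i:ℕ) := by
    have := Nat.cast_nonneg (α := ℝ) i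
    linarith
  have hbj : (-1:ℝ) < α + (j:ℕ) := by
    have := Nat.cast_nonneg (α := ℝ) j
    linarith
  obtain ⟨si, hsic, hsisub, hsiprod⟩ := Qf_factor (n-i) (((q+i : ℕ):ℝ) + 1/2) (α + i) hai hbi
  obtain ⟨sj, hsjc, hsjsub, hsjprod⟩ := Qf_factor (n-j) (((q+j : ℕ):ℝ) + 1/2) (α + j) haj hbj
  have hsine : si.Nonempty := by
    rw [← Finset.card_pos, hsic]; omega
  have hsjne : sj.Nonempty := by
    rw [← Finset.card_pos, hsjc]; omega
  obtain ⟨S, hSc, hSprod, hSmem, hSmax⟩ :=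
    Qf_build (n-i) (((q+i : ℕ):ℝ) + 1/2) (α + i) si hsine hsisub hsiprod
  obtain ⟨T, hTc, hTprod, hTmem, hTmax⟩ :=
    Qf_build (n-j) (((q+j : ℕ):ℝ) + 1/2) (α + j) sj hsjne hsjsub hsjprod
  -- the chain comparison
  have hchain : sj.max' hsjne < si.max' hsine := by
    apply root_lt_max (j - i) (by omega) (n - i) (((q+i : ℕ):ℝ) + 1/2) (α + i) hai hbi
      (by omega) si hsine hsiprod
    have e1 : n - i - (j - i) = n - j := by omega
    have e2 : ((q+i : ℕ):ℝ) + 1/2 + ((j - i : ℕ):ℝ) = ((q+j : ℕ):ℝ) + 1/2 := by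
      push_cast [Nat.cast_sub hij.le]
      ring
    have e3 : α + (i:ℕ) + ((j - i : ℕ):ℝ) = α + (j:ℕ) := by
      push_cast [Nat.cast_sub hij.le]
      ring
    rw [e1, e2, e3, hsjprod]
    exact Finset.prod_eq_zero (sj.max'_mem hsjne) (by ring)
  refine ⟨S, T, by rw [hSc, hsic], by rw [hTc, hsjc], ?_, ?_,
    Real.sqrt (sj.max' hsjne), Real.sqrt (si.max' hsine), hTmem, hSmem, hTmax, hSmax, ?_⟩
  · intro x
    rw [Peven_eq_Qf, hSprod]
  · intro x
    rw [Peven_eq_Qf, hTprod]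
  · exact Real.sqrt_lt_sqrt ((hsjsub (sj.max'_mem hsjne)).1.le) hchain
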